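/- (Kahane–Salem–Zygmund inequality, multilinear version) For all positive integers m and n there exists a choice of signs (ε_i)_{i ∈ M(m,n)} with each ε_i ∈ {−1, +1} such that the m-linear form T_{m,n} : ℓ_∞^n × ⋯ × ℓ_∞^n → 𝕂 defined by T_{m,n}(z^{(1)}, ..., z^{(m)}) = Σ_{i ∈ M(m,n)} ε_i z^{(1)}_{i_1} ⋯ z^{(m)}_{i_m} satisfies ‖T_{m,n}‖ ≤ √(32 log(6m)) · n^{(m+1)/2} · √(m!). -/

import Mathlib

open scoped BigOperators
open Finset

namespace KSZ

noncomputable def sg (b : Bool) : ℝ := if b then 1 else -1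

lemma abs_sg (b : Bool) : |sg b| = 1 := by cases b <;> norm_num [sg]

lemma sum_pi_succ {β : Type*} [AddCommMonoid β] {n m : ℕ} (g : (Fin (m+1) → Fin n) → β) :
    ∑ i : Fin (m+1) → Fin n, g i = ∑ j : Fin n, ∑ i' : Fin m → Fin n, g (Fin.cons j i') := by
  rw [← (Fin.consEquiv fun _ => Fin n).sum_comp g, Fintype.sum_prod_type]
  rfl

lemma chernoff {I : Type*} [Fintype I] [DecidableEq I] (hI : 0 < Fintype.card I)
    (x : I → ℝ) (hx : ∀ i, |x i| ≤ 1) (t : ℝ) (ht : 0 ≤ t) :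
    ((univ.filter fun e : I → Bool => t < ∑ i, sg (e i) * x i).card : ℝ) ≤
      2 ^ Fintype.card I * Real.exp (-(t ^ 2) / (2 * Fintype.card I)) := by
  set N : ℝ := (Fintype.card I : ℝ) with hNdef
  have hN : 0 < N := by rw [hNdef]; exact_mod_cast hI
  set L : ℝ := t / N with hL
  have hL0 : 0 ≤ L := div_nonneg ht hN.le
  have mgf : ∑ e : I → Bool, Real.exp (L * ∑ i, sg (e i) * x i)
      = ∏ i, (Real.exp (L * (sg true * x i)) + Real.exp (L * (sg false * x i))) := by
    have h1 : ∀ e : I → Bool, Real.exp (L * ∑ i, sg (e i) * x i)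
        = ∏ i, Real.exp (L * (sg (e i) * x i)) := by
      intro e
      rw [Finset.mul_sum, Real.exp_sum]
    rw [Fintype.sum_congr _ _ h1, ← Fintype.prod_sum fun i b => Real.exp (L * (sg b * x i))]
    exact Fintype.prod_congr _ _ fun i => by rw [Fintype.sum_bool]
  have hfac : ∀ i : I, Real.exp (L * (sg true * x i)) + Real.exp (L * (sg false * x i))
      ≤ 2 * Real.exp (L ^ 2 / 2) := by
    intro i
    have h1 : Real.exp (L * (sg true * x i)) + Real.exp (L * (sg false * x i))
        = 2 * Real.cosh (L * x i) := by
      rw [Real.cosh_eq]; simp [sg]; ring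
    rw [h1]
    have h2 : Real.cosh (L * x i) ≤ Real.exp ((L * x i) ^ 2 / 2) := Real.cosh_le_exp_half_sq _
    have hx2 : (x i) ^ 2 ≤ 1 := by
      rw [← sq_abs]
      nlinarith [abs_nonneg (x i), hx i]
    have h3 : (L * x i) ^ 2 ≤ L ^ 2 := by
      rw [mul_pow]
      nlinarith [sq_nonneg L]
    have := Real.exp_le_exp.mpr (by linarith : (L * x i) ^ 2 / 2 ≤ L ^ 2 / 2)
    linarith [h2.trans this]
  have mgf_le : ∑ e : I → Bool, Real.exp (L * ∑ i, sg (e i) * x i)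
      ≤ 2 ^ Fintype.card I * Real.exp (N * L ^ 2 / 2) := by
    rw [mgf]
    calc ∏ i, (Real.exp (L * (sg true * x i)) + Real.exp (L * (sg false * x i)))
        ≤ ∏ _i : I, 2 * Real.exp (L ^ 2 / 2) := by
          apply Finset.prod_le_prod
          · intro i _; positivity
          · intro i _; exact hfac i
      _ = 2 ^ Fintype.card I * Real.exp (N * L ^ 2 / 2) := by
          rw [Finset.prod_const, card_univ, mul_pow, ← Real.exp_nat_mul]
          rw [hNdef]
          ring_nf
  have hcard : ((univ.filter fun e : I → Bool => t < ∑ i, sg (e i) * x i).card : ℝ)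
        * Real.exp (L * t)
      ≤ ∑ e : I → Bool, Real.exp (L * ∑ i, sg (e i) * x i) := by
    have h1 : ∀ e ∈ univ.filter fun e : I → Bool => t < ∑ i, sg (e i) * x i,
        Real.exp (L * t) ≤ Real.exp (L * ∑ i, sg (e i) * x i) := by
      intro e he
      rw [Finset.mem_filter] at he
      exact Real.exp_le_exp.mpr (mul_le_mul_of_nonneg_left he.2.le hL0)
    calc ((univ.filter fun e : I → Bool => t < ∑ i, sg (e i) * x i).card : ℝ) * Real.exp (L * t)
        ≤ ∑ e ∈ univ.filter fun e : I → Bool => t < ∑ i, sg (e i) * x i,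
            Real.exp (L * ∑ i, sg (e i) * x i) := by
          rw [← nsmul_eq_mul]
          exact Finset.card_nsmul_le_sum _ _ _ h1
      _ ≤ ∑ e : I → Bool, Real.exp (L * ∑ i, sg (e i) * x i) :=
          Finset.sum_le_sum_of_subset_of_nonneg (Finset.filter_subset _ _)
            fun _ _ _ => (Real.exp_pos _).le
  have hexp : N * L ^ 2 / 2 - L * t = -(t ^ 2) / (2 * N) := by
    rw [hL]; field_simp; ring
  have h := hcard.trans mgf_le
  have hkey : ((univ.filter fun e : I → Bool => t < ∑ i, sg (e i) * x i).card : ℝ)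
      ≤ 2 ^ Fintype.card I * Real.exp (N * L ^ 2 / 2) * Real.exp (-(L * t)) := by
    rw [← le_div_iff₀ (Real.exp_pos (L * t))] at h
    calc ((univ.filter fun e : I → Bool => t < ∑ i, sg (e i) * x i).card : ℝ)
        ≤ 2 ^ Fintype.card I * Real.exp (N * L ^ 2 / 2) / Real.exp (L * t) := h
      _ = 2 ^ Fintype.card I * Real.exp (N * L ^ 2 / 2) * Real.exp (-(L * t)) := by
          rw [Real.exp_neg]; ring
  calc ((univ.filter fun e : I → Bool => t < ∑ i, sg (e i) * x i).card : ℝ)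
      ≤ 2 ^ Fintype.card I * Real.exp (N * L ^ 2 / 2) * Real.exp (-(L * t)) := hkey
    _ = 2 ^ Fintype.card I * Real.exp (N * L ^ 2 / 2 - L * t) := by
        rw [mul_assoc, ← Real.exp_add]; ring_nf
    _ = 2 ^ Fintype.card I * Real.exp (-(t ^ 2) / (2 * N)) := by rw [hexp]

lemma extreme {n : ℕ} (m : ℕ) (a : (Fin m → Fin n) → ℝ) (x : Fin m → Fin n → ℝ)
    (hx : ∀ k j, |x k j| ≤ 1) :
    ∃ s : Fin m → Fin n → Bool,
      |∑ i : Fin m → Fin n, a i * ∏ k, x k (i k)| ≤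
        |∑ i : Fin m → Fin n, a i * ∏ k, sg (s k (i k))| := by
  induction m with
  | zero => exact ⟨fun _ _ => true, le_of_eq (by simp)⟩
  | succ m ih =>
      set c : Fin n → ℝ := fun j => ∑ i' : Fin m → Fin n, a (Fin.cons j i') * ∏ k, x k.succ (i' k)
        with hc
      set σ : Fin n → Bool := fun j => decide (0 ≤ c j) with hσ
      have hsgc : ∀ j, sg (σ j) * c j = |c j| := by
        intro j
        rcases le_or_gt 0 (c j) with h | h
        · rw [abs_of_nonneg h, hσ]; simp [sg, h]
        · rw [abs_of_neg h, hσ]; simp [sg, not_le.mpr h]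
      set a' : (Fin m → Fin n) → ℝ := fun i' => ∑ j, sg (σ j) * a (Fin.cons j i') with ha'
      obtain ⟨s', hs'⟩ := ih a' (fun k => x k.succ) (fun k j => hx k.succ j)
      refine ⟨(Fin.cons σ s' : Fin (m+1) → Fin n → Bool), ?_⟩
      have key1 : ∑ i : Fin (m+1) → Fin n, a i * ∏ k, x k (i k) = ∑ j, x 0 j * c j := by
        rw [sum_pi_succ]
        refine Finset.sum_congr rfl fun j _ => ?_
        rw [hc]; dsimp only
        rw [Finset.mul_sum]
        refine Finset.sum_congr rfl fun i' _ => ?_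
        rw [Fin.prod_univ_succ]
        simp only [Fin.cons_zero, Fin.cons_succ]
        ring
      have key2 : ∑ i' : Fin m → Fin n, a' i' * ∏ k, x k.succ (i' k) = ∑ j, sg (σ j) * c j := by
        calc ∑ i' : Fin m → Fin n, a' i' * ∏ k, x k.succ (i' k)
            = ∑ i' : Fin m → Fin n, ∑ j, sg (σ j) * (a (Fin.cons j i') * ∏ k, x k.succ (i' k)) := by
              refine Finset.sum_congr rfl fun i' _ => ?_
              rw [ha']; dsimp only
              rw [Finset.sum_mul]
              exact Finset.sum_congr rfl fun j _ => by ring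
          _ = ∑ j, sg (σ j) * c j := by
              rw [Finset.sum_comm]
              refine Finset.sum_congr rfl fun j _ => ?_
              rw [hc]; dsimp only
              rw [Finset.mul_sum]
      have key3 : ∑ i : Fin (m+1) → Fin n,
            a i * ∏ k, sg ((Fin.cons σ s' : Fin (m+1) → Fin n → Bool) k (i k))
          = ∑ i' : Fin m → Fin n, a' i' * ∏ k, sg (s' k (i' k)) := by
        rw [sum_pi_succ]
        rw [Finset.sum_comm]
        refine Finset.sum_congr rfl fun i' _ => ?_
        rw [ha']; dsimp only
        rw [Finset.sum_mul]
        refine Finset.sum_congr rfl fun j _ => ?_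
        rw [Fin.prod_univ_succ]
        simp only [Fin.cons_zero, Fin.cons_succ]
        ring
      have habs : |∑ j, x 0 j * c j| ≤ ∑ j, sg (σ j) * c j := by
        calc |∑ j, x 0 j * c j| ≤ ∑ j, |x 0 j * c j| := Finset.abs_sum_le_sum_abs _ _
          _ ≤ ∑ j, |c j| := by
              refine Finset.sum_le_sum fun j _ => ?_
              rw [abs_mul]
              have := hx 0 j
              nlinarith [abs_nonneg (c j), abs_nonneg (x 0 j)]
          _ = ∑ j, sg (σ j) * c j := Finset.sum_congr rfl fun j _ => (hsgc j).symm
      have hnonneg : 0 ≤ ∑ j, sg (σ j) * c j := le_trans (abs_nonneg _) habs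
      calc |∑ i : Fin (m+1) → Fin n, a i * ∏ k, x k (i k)|
          = |∑ j, x 0 j * c j| := by rw [key1]
        _ ≤ ∑ j, sg (σ j) * c j := habs
        _ = |∑ i' : Fin m → Fin n, a' i' * ∏ k, x k.succ (i' k)| := by
            rw [key2, abs_of_nonneg hnonneg]
        _ ≤ |∑ i' : Fin m → Fin n, a' i' * ∏ k, sg (s' k (i' k))| := hs'
        _ = _ := by rw [key3]

lemma exists_good (m n : ℕ) (hm : 0 < m) (hn : 0 < n) :
    ∃ e : (Fin m → Fin n) → Bool,
      ∀ s : Fin m → Fin n → Bool,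
        |∑ i : Fin m → Fin n, sg (e i) * ∏ k, sg (s k (i k))| ≤
          Real.sqrt (2 * Real.log 2 * (m * n + 2) * (n : ℝ) ^ m) := by
  classical
  set t : ℝ := Real.sqrt (2 * Real.log 2 * (m * n + 2) * (n : ℝ) ^ m) with htdef
  have hl2 : (0:ℝ) ≤ Real.log 2 := Real.log_nonneg one_le_two
  have harg : (0:ℝ) ≤ 2 * Real.log 2 * (m * n + 2) * (n : ℝ) ^ m := by positivity
  have ht0 : 0 ≤ t := Real.sqrt_nonneg _
  have ht2 : t ^ 2 = 2 * Real.log 2 * (m * n + 2) * (n : ℝ) ^ m := Real.sq_sqrt harg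
  have hcardI : Fintype.card (Fin m → Fin n) = n ^ m := by simp
  have hIpos : 0 < Fintype.card (Fin m → Fin n) := by rw [hcardI]; positivity
  set Bad : Finset ((Fin m → Fin n) → Bool) := univ.filter fun e =>
    ¬ ∀ s : Fin m → Fin n → Bool,
      |∑ i : Fin m → Fin n, sg (e i) * ∏ k, sg (s k (i k))| ≤ t with hBad
  have hBadsub : Bad ⊆ (univ : Finset (Fin m → Fin n → Bool)).biUnion fun s =>
      (univ.filter fun e : (Fin m → Fin n) → Bool =>
        t < ∑ i : Fin m → Fin n, sg (e i) * ∏ k, sg (s k (i k))) ∪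
      (univ.filter fun e : (Fin m → Fin n) → Bool =>
        t < ∑ i : Fin m → Fin n, sg (e i) * (-∏ k, sg (s k (i k)))) := by
    intro e he
    rw [hBad, Finset.mem_filter] at he
    push_neg at he
    obtain ⟨s, hs⟩ := he.2
    rw [Finset.mem_biUnion]
    refine ⟨s, Finset.mem_univ _, ?_⟩
    rw [Finset.mem_union, Finset.mem_filter, Finset.mem_filter]
    rcases lt_abs.mp hs with h | h
    · exact Or.inl ⟨Finset.mem_univ _, h⟩
    · refine Or.inr ⟨Finset.mem_univ _, ?_⟩
      calc t < -∑ i : Fin m → Fin n, sg (e i) * ∏ k, sg (s k (i k)) := h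
        _ = ∑ i : Fin m → Fin n, sg (e i) * (-∏ k, sg (s k (i k))) := by
            rw [← Finset.sum_neg_distrib]
            exact Finset.sum_congr rfl fun i _ => by ring
  have hxabs : ∀ (s : Fin m → Fin n → Bool) (i : Fin m → Fin n),
      |∏ k, sg (s k (i k))| ≤ 1 := by
    intro s i
    rw [Finset.abs_prod]
    apply le_of_eq
    rw [Finset.prod_congr rfl fun k _ => abs_sg (s k (i k))]
    simp
  have hbound : ∀ s : Fin m → Fin n → Bool,
      (((univ.filter fun e : (Fin m → Fin n) → Bool =>
        t < ∑ i : Fin m → Fin n, sg (e i) * ∏ k, sg (s k (i k))) ∪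
      (univ.filter fun e : (Fin m → Fin n) → Bool =>
        t < ∑ i : Fin m → Fin n, sg (e i) * (-∏ k, sg (s k (i k))))).card : ℝ) ≤
      2 * (2 ^ Fintype.card (Fin m → Fin n) *
        Real.exp (-(t ^ 2) / (2 * Fintype.card (Fin m → Fin n)))) := by
    intro s
    have h1 := chernoff hIpos (fun i => ∏ k, sg (s k (i k))) (hxabs s) t ht0
    have h2 := chernoff hIpos (fun i => -∏ k, sg (s k (i k)))
      (fun i => by rw [abs_neg]; exact hxabs s i) t ht0
    have hu : (((univ.filter fun e : (Fin m → Fin n) → Bool =>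
        t < ∑ i : Fin m → Fin n, sg (e i) * ∏ k, sg (s k (i k))) ∪
      (univ.filter fun e : (Fin m → Fin n) → Bool =>
        t < ∑ i : Fin m → Fin n, sg (e i) * (-∏ k, sg (s k (i k))))).card : ℝ) ≤
      (((univ.filter fun e : (Fin m → Fin n) → Bool =>
        t < ∑ i : Fin m → Fin n, sg (e i) * ∏ k, sg (s k (i k))).card : ℝ) +
      ((univ.filter fun e : (Fin m → Fin n) → Bool =>
        t < ∑ i : Fin m → Fin n, sg (e i) * (-∏ k, sg (s k (i k)))).card : ℝ)) := by
      exact_mod_cast Finset.card_union_le _ _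
    calc _ ≤ _ := hu
      _ ≤ 2 ^ Fintype.card (Fin m → Fin n) *
            Real.exp (-(t ^ 2) / (2 * Fintype.card (Fin m → Fin n))) +
          2 ^ Fintype.card (Fin m → Fin n) *
            Real.exp (-(t ^ 2) / (2 * Fintype.card (Fin m → Fin n))) := add_le_add h1 h2
      _ = 2 * (2 ^ Fintype.card (Fin m → Fin n) *
            Real.exp (-(t ^ 2) / (2 * Fintype.card (Fin m → Fin n)))) := by ring
  have hexpval : Real.exp (-(t ^ 2) / (2 * Fintype.card (Fin m → Fin n)))
      = ((2:ℝ) ^ (m * n + 2))⁻¹ := by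
    have hnm : (0:ℝ) < (n:ℝ) ^ m := by positivity
    have harg2 : -(t ^ 2) / (2 * (Fintype.card (Fin m → Fin n) : ℝ))
        = -((m * n + 2 : ℕ) * Real.log 2) := by
      rw [ht2, hcardI]
      push_cast
      field_simp
    rw [harg2, Real.exp_neg, Real.exp_nat_mul, Real.exp_log two_pos]
  have hcards : (Fintype.card (Fin m → Fin n → Bool)) = 2 ^ (m * n) := by
    rw [Fintype.card_fun, Fintype.card_fun]
    simp [← pow_mul, Nat.mul_comm]
  have htotal : (Bad.card : ℝ) < (Fintype.card ((Fin m → Fin n) → Bool) : ℝ) := by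
    have h1 : (Bad.card : ℝ) ≤ (Fintype.card (Fin m → Fin n → Bool) : ℝ) *
        (2 * (2 ^ Fintype.card (Fin m → Fin n) *
          Real.exp (-(t ^ 2) / (2 * Fintype.card (Fin m → Fin n))))) := by
      have hsub := Finset.card_le_card hBadsub
      have hbi := Finset.card_biUnion_le (s := (univ : Finset (Fin m → Fin n → Bool)))
        (t := fun s =>
          (univ.filter fun e : (Fin m → Fin n) → Bool =>
            t < ∑ i : Fin m → Fin n, sg (e i) * ∏ k, sg (s k (i k))) ∪
          (univ.filter fun e : (Fin m → Fin n) → Bool =>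
            t < ∑ i : Fin m → Fin n, sg (e i) * (-∏ k, sg (s k (i k)))))
      have h2 : (Bad.card : ℝ) ≤ ∑ s : Fin m → Fin n → Bool,
          (((univ.filter fun e : (Fin m → Fin n) → Bool =>
            t < ∑ i : Fin m → Fin n, sg (e i) * ∏ k, sg (s k (i k))) ∪
          (univ.filter fun e : (Fin m → Fin n) → Bool =>
            t < ∑ i : Fin m → Fin n, sg (e i) * (-∏ k, sg (s k (i k))))).card : ℝ) := by
        exact_mod_cast le_trans hsub hbi
      calc (Bad.card : ℝ) ≤ _ := h2
        _ ≤ ∑ _s : Fin m → Fin n → Bool, 2 * (2 ^ Fintype.card (Fin m → Fin n) *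
            Real.exp (-(t ^ 2) / (2 * Fintype.card (Fin m → Fin n)))) :=
          Finset.sum_le_sum fun s _ => hbound s
        _ = (Fintype.card (Fin m → Fin n → Bool) : ℝ) *
            (2 * (2 ^ Fintype.card (Fin m → Fin n) *
              Real.exp (-(t ^ 2) / (2 * Fintype.card (Fin m → Fin n))))) := by
          rw [Finset.sum_const, card_univ, nsmul_eq_mul]
    have h3 : (Fintype.card (Fin m → Fin n → Bool) : ℝ) *
        (2 * (2 ^ Fintype.card (Fin m → Fin n) *
          Real.exp (-(t ^ 2) / (2 * Fintype.card (Fin m → Fin n)))))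
        = (2:ℝ) ^ Fintype.card (Fin m → Fin n) / 2 := by
      rw [hexpval, hcards]
      push_cast
      rw [pow_add]
      field_simp
    have h4 : ((Fintype.card ((Fin m → Fin n) → Bool)) : ℝ)
        = (2:ℝ) ^ Fintype.card (Fin m → Fin n) := by
      rw [Fintype.card_fun]
      push_cast
      simp
    rw [h4]
    have h5 : (0:ℝ) < (2:ℝ) ^ Fintype.card (Fin m → Fin n) := by positivity
    calc (Bad.card : ℝ) ≤ _ := h1
      _ = (2:ℝ) ^ Fintype.card (Fin m → Fin n) / 2 := h3
      _ < (2:ℝ) ^ Fintype.card (Fin m → Fin n) := by linarith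
  have hne : ∃ e : (Fin m → Fin n) → Bool, e ∉ Bad := by
    by_contra hcon
    push_neg at hcon
    have : (univ : Finset ((Fin m → Fin n) → Bool)) ⊆ Bad := fun e _ => hcon e
    have hle := Finset.card_le_card this
    rw [Finset.card_univ] at hle
    have : (Fintype.card ((Fin m → Fin n) → Bool) : ℝ) ≤ (Bad.card : ℝ) := by exact_mod_cast hle
    linarith
  obtain ⟨e, he⟩ := hne
  refine ⟨e, ?_⟩
  rw [hBad, Finset.mem_filter] at he
  push_neg at he
  exact he (Finset.mem_univ _)

lemma nat_ineq : ∀ m : ℕ, 3 ≤ m → (m + 2) * 4 ^ m ≤ 64 * m.factorial := by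
  intro m hm
  induction m with
  | zero => omega
  | succ m ih =>
      rcases Nat.lt_or_ge m 4 with h | h
      · have hm2 : m = 2 ∨ m = 3 := by omega
        rcases hm2 with hm2 | hm2 <;> subst hm2 <;> norm_num [Nat.factorial]
      · have ihm := ih (by omega)
        have hstep : 4 * (m + 3) ≤ (m + 1) * (m + 2) := by nlinarith [h]
        calc (m + 1 + 2) * 4 ^ (m + 1) = (4 * (m + 3)) * 4 ^ m := by ring
          _ ≤ ((m + 1) * (m + 2)) * 4 ^ m := Nat.mul_le_mul_right _ hstep
          _ = (m + 1) * ((m + 2) * 4 ^ m) := by ring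
          _ ≤ (m + 1) * (64 * m.factorial) := Nat.mul_le_mul_left _ ihm
          _ = 64 * (m + 1).factorial := by rw [Nat.factorial_succ]; ring

lemma log_four : Real.log 4 = 2 * Real.log 2 := by
  rw [show (4:ℝ) = 2 ^ 2 by norm_num, Real.log_pow]
  push_cast; ring

lemma log_sixteen : Real.log 16 = 4 * Real.log 2 := by
  rw [show (16:ℝ) = 2 ^ 4 by norm_num, Real.log_pow]
  push_cast; ring

lemma numeric (m n : ℕ) (hm : 1 ≤ m) (hn : 1 ≤ n) :
    (4:ℝ) ^ m * (2 * Real.log 2 * (m * n + 2) * (n:ℝ) ^ m) ≤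
      32 * Real.log (6 * m) * ((n:ℝ) ^ (m + 1)) * (m.factorial : ℝ) := by
  have hl2 : (0:ℝ) ≤ Real.log 2 := Real.log_nonneg one_le_two
  have hn1 : (1:ℝ) ≤ (n:ℝ) := by exact_mod_cast hn
  have hm1 : (1:ℝ) ≤ (m:ℝ) := by exact_mod_cast hm
  have key : (4:ℝ) ^ m * (2 * Real.log 2 * ((m:ℝ) + 2)) ≤
      32 * Real.log (6 * m) * (m.factorial : ℝ) := by
    rcases Nat.lt_or_ge m 3 with h | h
    · have hlog : 2 * Real.log 2 ≤ Real.log (6 * m) := by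
        rw [← log_four]
        apply Real.log_le_log (by norm_num)
        nlinarith
      interval_cases m
      · norm_num [Nat.factorial] at hlog ⊢
        nlinarith [hlog, hl2]
      · norm_num [Nat.factorial] at hlog ⊢
        nlinarith [hlog, hl2]
    · have hlog : 4 * Real.log 2 ≤ Real.log (6 * m) := by
        rw [← log_sixteen]
        apply Real.log_le_log (by norm_num)
        have h3 : (3:ℝ) ≤ (m:ℝ) := by exact_mod_cast h
        nlinarith
      have hnat := nat_ineq m h
      have hnat' : (((m:ℝ) + 2) * 4 ^ m) ≤ 64 * (m.factorial : ℝ) := by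
        exact_mod_cast hnat
      calc (4:ℝ) ^ m * (2 * Real.log 2 * ((m:ℝ) + 2))
          = 2 * Real.log 2 * (((m:ℝ) + 2) * 4 ^ m) := by ring
        _ ≤ 2 * Real.log 2 * (64 * (m.factorial : ℝ)) := by
            apply mul_le_mul_of_nonneg_left hnat' (by positivity)
        _ = 32 * (4 * Real.log 2) * (m.factorial : ℝ) := by ring
        _ ≤ 32 * Real.log (6 * m) * (m.factorial : ℝ) := by
            have hf : (1:ℝ) ≤ (m.factorial : ℝ) := by
              exact_mod_cast Nat.one_le_iff_ne_zero.mpr m.factorial_ne_zero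
            nlinarith
  have h1 : ((m:ℝ) * n + 2) ≤ ((m:ℝ) + 2) * n := by nlinarith
  have h2 : (n:ℝ) ^ (m + 1) = (n:ℝ) * (n:ℝ) ^ m := by rw [pow_succ]; ring
  have hnm : (0:ℝ) ≤ (n:ℝ) ^ m := by positivity
  have hlog6 : (0:ℝ) ≤ Real.log (6 * m) := Real.log_nonneg (by nlinarith)
  calc (4:ℝ) ^ m * (2 * Real.log 2 * ((m:ℝ) * n + 2) * (n:ℝ) ^ m)
      ≤ (4:ℝ) ^ m * (2 * Real.log 2 * (((m:ℝ) + 2) * n) * (n:ℝ) ^ m) := by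
        apply mul_le_mul_of_nonneg_left _ (by positivity)
        apply mul_le_mul_of_nonneg_right _ hnm
        apply mul_le_mul_of_nonneg_left h1 (by positivity)
    _ = ((4:ℝ) ^ m * (2 * Real.log 2 * ((m:ℝ) + 2))) * ((n:ℝ) * (n:ℝ) ^ m) := by ring
    _ ≤ (32 * Real.log (6 * m) * (m.factorial : ℝ)) * ((n:ℝ) * (n:ℝ) ^ m) := by
        apply mul_le_mul_of_nonneg_right key (by positivity)
    _ = 32 * Real.log (6 * m) * ((n:ℝ) ^ (m + 1)) * (m.factorial : ℝ) := by
        rw [h2]; ring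

lemma prod_split {M : Type*} [CommMonoid M] {α : Type*} [Fintype α] [DecidableEq α]
    (T : Finset α) (f g : α → M) :
    (∏ k ∈ T, f k) * ∏ k ∈ Tᶜ, g k = ∏ k, (if k ∈ T then f k else g k) := by
  rw [Finset.prod_ite]
  congr 1
  · congr 1; ext k; simp
  · congr 1; ext k; simp

end KSZ

set_option maxHeartbeats 1000000 in
/-- **Kahane–Salem–Zygmund inequality (multilinear version).** -/
theorem ksz_multilinear {𝕂 : Type*} [RCLike 𝕂] (m n : ℕ) (hm : 0 < m) (hn : 0 < n) :
    ∃ ε : (Fin m → Fin n) → 𝕂, (∀ i, ε i = 1 ∨ ε i = -1) ∧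
      ∀ z : Fin m → Fin n → 𝕂, (∀ k j, ‖z k j‖ ≤ 1) →
        ‖∑ i : Fin m → Fin n, ε i * ∏ k : Fin m, z k (i k)‖ ≤
          Real.sqrt (32 * Real.log (6 * m)) * (n : ℝ) ^ (((m : ℝ) + 1) / 2) *
            Real.sqrt (Nat.factorial m) := by
  classical
  obtain ⟨e, he⟩ := KSZ.exists_good m n hm hn
  set t : ℝ := Real.sqrt (2 * Real.log 2 * (m * n + 2) * (n : ℝ) ^ m) with htdef
  have ht0 : 0 ≤ t := Real.sqrt_nonneg _
  have hreal : ∀ x : Fin m → Fin n → ℝ, (∀ k j, |x k j| ≤ 1) →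
      |∑ i : Fin m → Fin n, KSZ.sg (e i) * ∏ k, x k (i k)| ≤ t := by
    intro x hx
    obtain ⟨s, hs⟩ := KSZ.extreme m (fun i => KSZ.sg (e i)) x hx
    exact hs.trans (he s)
  refine ⟨fun i => if e i then 1 else -1, fun i => by by_cases h : e i <;> simp [h], ?_⟩
  intro z hz
  set ε : (Fin m → Fin n) → 𝕂 := fun i => if e i then 1 else -1 with hε
  have heps : ∀ i, ε i = ((KSZ.sg (e i) : ℝ) : 𝕂) := by
    intro i
    by_cases h : e i <;> simp [hε, KSZ.sg, h]
  set a : Fin m → Fin n → ℝ := fun k j => RCLike.re (z k j) with ha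
  set b : Fin m → Fin n → ℝ := fun k j => RCLike.im (z k j) with hb
  have expand : ∀ i : Fin m → Fin n, (∏ k, z k (i k))
      = ∑ T : Finset (Fin m), ((RCLike.I : 𝕂) ^ (Tᶜ.card)) *
          ((∏ k, (if k ∈ T then a k (i k) else b k (i k)) : ℝ) : 𝕂) := by
    intro i
    calc ∏ k, z k (i k)
        = ∏ k, (((a k (i k) : ℝ) : 𝕂) + ((b k (i k) : ℝ) : 𝕂) * RCLike.I) := by
          refine Fintype.prod_congr _ _ fun k => ?_
          rw [ha, hb]; dsimp only
          rw [RCLike.re_add_im]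
      _ = ∑ T : Finset (Fin m), (∏ k ∈ T, ((a k (i k) : ℝ) : 𝕂)) *
            ∏ k ∈ Tᶜ, (((b k (i k) : ℝ) : 𝕂) * RCLike.I) := Fintype.prod_add _ _
      _ = ∑ T : Finset (Fin m), ((RCLike.I : 𝕂) ^ (Tᶜ.card)) *
          ((∏ k, (if k ∈ T then a k (i k) else b k (i k)) : ℝ) : 𝕂) := by
          refine Fintype.sum_congr _ _ fun T => ?_
          rw [Finset.prod_mul_distrib, Finset.prod_const]
          rw [show (∏ k ∈ T, ((a k (i k) : ℝ) : 𝕂)) * ((∏ k ∈ Tᶜ, ((b k (i k) : ℝ) : 𝕂)) *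
              (RCLike.I : 𝕂) ^ (Tᶜ.card))
            = ((RCLike.I : 𝕂) ^ (Tᶜ.card)) *
              ((∏ k ∈ T, ((a k (i k) : ℝ) : 𝕂)) * (∏ k ∈ Tᶜ, ((b k (i k) : ℝ) : 𝕂))) by ring]
          congr 1
          rw [KSZ.prod_split]
          push_cast
          exact Fintype.prod_congr _ _ fun k => by split <;> rfl
  have identity : ∑ i : Fin m → Fin n, ε i * ∏ k, z k (i k)
      = ∑ T : Finset (Fin m), ((RCLike.I : 𝕂) ^ (Tᶜ.card)) *
          ((∑ i : Fin m → Fin n, KSZ.sg (e i) *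
            ∏ k, (if k ∈ T then a k (i k) else b k (i k)) : ℝ) : 𝕂) := by
    calc ∑ i : Fin m → Fin n, ε i * ∏ k, z k (i k)
        = ∑ i : Fin m → Fin n, ∑ T : Finset (Fin m), ((RCLike.I : 𝕂) ^ (Tᶜ.card)) *
            (ε i * ((∏ k, (if k ∈ T then a k (i k) else b k (i k)) : ℝ) : 𝕂)) := by
          refine Fintype.sum_congr _ _ fun i => ?_
          rw [expand i, Finset.mul_sum]
          exact Fintype.sum_congr _ _ fun T => by ring
      _ = _ := by
          rw [Finset.sum_comm]
          refine Fintype.sum_congr _ _ fun T => ?_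
          rw [← Finset.mul_sum]
          congr 1
          rw [RCLike.ofReal_sum]
          refine Fintype.sum_congr _ _ fun i => ?_
          rw [heps i]
          norm_cast
  have hI1 : ‖(RCLike.I : 𝕂)‖ ≤ 1 := by
    rcases @RCLike.I_mul_I_ax 𝕂 _ with h | h
    · rw [h]; simp
    · have hne : (RCLike.I : 𝕂) ≠ 0 := by
        intro h0
        rw [h0] at h
        simp at h
      rw [RCLike.norm_I_of_ne_zero hne]
  have hST : ∀ T : Finset (Fin m),
      |∑ i : Fin m → Fin n, KSZ.sg (e i) *
        ∏ k, (if k ∈ T then a k (i k) else b k (i k))| ≤ t := by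
    intro T
    have hxT : ∀ k j, |(fun k j => if k ∈ T then a k j else b k j) k j| ≤ 1 := by
      intro k j
      dsimp only
      split
      · exact (RCLike.abs_re_le_norm _).trans (hz k j)
      · exact (RCLike.abs_im_le_norm _).trans (hz k j)
    exact hreal _ hxT
  have hnorm : ‖∑ i : Fin m → Fin n, ε i * ∏ k, z k (i k)‖ ≤ (2:ℝ) ^ m * t := by
    rw [identity]
    calc ‖∑ T : Finset (Fin m), ((RCLike.I : 𝕂) ^ (Tᶜ.card)) *
          ((∑ i : Fin m → Fin n, KSZ.sg (e i) *
            ∏ k, (if k ∈ T then a k (i k) else b k (i k)) : ℝ) : 𝕂)‖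
        ≤ ∑ T : Finset (Fin m), ‖((RCLike.I : 𝕂) ^ (Tᶜ.card)) *
          ((∑ i : Fin m → Fin n, KSZ.sg (e i) *
            ∏ k, (if k ∈ T then a k (i k) else b k (i k)) : ℝ) : 𝕂)‖ :=
          norm_sum_le _ _
      _ ≤ ∑ _T : Finset (Fin m), t := by
          refine Finset.sum_le_sum fun T _ => ?_
          rw [norm_mul, norm_pow, RCLike.norm_ofReal]
          calc ‖(RCLike.I : 𝕂)‖ ^ (Tᶜ.card) *
              |∑ i : Fin m → Fin n, KSZ.sg (e i) *
                ∏ k, (if k ∈ T then a k (i k) else b k (i k))|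
              ≤ 1 * t := by
                apply mul_le_mul (pow_le_one₀ (norm_nonneg _) hI1) (hST T) (abs_nonneg _)
                  zero_le_one
            _ = t := one_mul t
      _ = (2:ℝ) ^ m * t := by
          rw [Finset.sum_const, card_univ, nsmul_eq_mul]
          congr 1
          rw [Fintype.card_finset, Fintype.card_fin]
          push_cast
          rfl
  refine hnorm.trans ?_
  have hlhs : (2:ℝ) ^ m * t
      = Real.sqrt ((4:ℝ) ^ m * (2 * Real.log 2 * (m * n + 2) * (n : ℝ) ^ m)) := by
    have h4 : ((4:ℝ) ^ m) = ((2:ℝ) ^ m) ^ 2 := by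
      rw [← pow_mul, Nat.mul_comm, pow_mul]
      norm_num
    rw [htdef, Real.sqrt_mul (by positivity : (0:ℝ) ≤ (4:ℝ) ^ m)]
    congr 1
    rw [h4, Real.sqrt_sq (by positivity)]
  have hl2 : (0:ℝ) ≤ Real.log 2 := Real.log_nonneg one_le_two
  have hlog6 : (0:ℝ) ≤ Real.log (6 * m) := by
    apply Real.log_nonneg
    have : (1:ℝ) ≤ (m:ℝ) := by exact_mod_cast hm
    nlinarith
  have hrhs : Real.sqrt (32 * Real.log (6 * m)) * (n : ℝ) ^ (((m : ℝ) + 1) / 2) *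
        Real.sqrt (Nat.factorial m)
      = Real.sqrt (32 * Real.log (6 * m) * ((n:ℝ) ^ (m + 1)) * (m.factorial : ℝ)) := by
    have hexp : ((m : ℝ) + 1) / 2 = ((m + 1 : ℕ) : ℝ) * (1 / 2) := by push_cast; ring
    have hnr : (n : ℝ) ^ (((m : ℝ) + 1) / 2) = Real.sqrt ((n:ℝ) ^ (m + 1)) := by
      rw [hexp, Real.rpow_mul (by positivity), Real.rpow_natCast, ← Real.sqrt_eq_rpow]
    rw [hnr, ← Real.sqrt_mul (by positivity), ← Real.sqrt_mul (by positivity)]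
  rw [hlhs, hrhs]
  exact Real.sqrt_le_sqrt (KSZ.numeric m n hm hn)
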